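/- For every positive integer n and every real α with 0 ≤ α ≤ 1, the following two-sided bound holds: α + α(1-α)/(4n) ≤ (n + 1/2)·ln((n+α)/n) ≤ α + α(1-α)/(4n) + 1/(16n). -/

import Mathlib

set_option maxHeartbeats 1000000 in
lemma key_low (N a u : ℝ) (hN : 1 ≤ N) (h0 : 0 ≤ a) (h1 : a ≤ 1)
    (hu : u = a / (2*N + a)) :
    a + a*(1-a)/(4*N) ≤ (N + 1/2) * (2*u + 2*u^3/3 + 2*u^5/5 - 2*(u^6/(1-u))) := by
  subst hu
  have h2 : (0:ℝ) < 2*N + a := by linarith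
  have hN0 : (0:ℝ) < N := by linarith
  have h1u : 1 - a/(2*N+a) = (2*N)/(2*N+a) := by field_simp; ring
  rw [h1u, ← sub_nonneg]
  have key : (N + 1/2) * (2*(a/(2*N+a)) + 2*(a/(2*N+a))^3/3 + 2*(a/(2*N+a))^5/5
      - 2*((a/(2*N+a))^6/((2*N)/(2*N+a)))) - (a + a*(1-a)/(4*N))
      = (480*N^6*a - 480*N^6*a^2 + 720*N^5*a^2 - 560*N^5*a^3 + 320*N^4*a^3 - 80*N^4*a^4
        - 40*N^3*a^4 + 184*N^3*a^5 - 58*N^2*a^5 + 30*N^2*a^6 - 45*N*a^6 + 15*N*a^7)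
        / (60*N^2*(2*N+a)^5) := by
    field_simp
    ring
  rw [key]
  apply div_nonneg _ (by positivity)
  have haN : a ≤ N := h1.trans hN
  have p2 : a^2 ≤ N^2 := by nlinarith
  have p3 : a^3 ≤ N^3 := by nlinarith
  have p4 : a^4 ≤ N^4 := by nlinarith
  have A1 : 0 ≤ 480*(N^6*a*(1-a)) := by
    have := mul_nonneg (mul_nonneg (by positivity : (0:ℝ) ≤ N^6) h0) (sub_nonneg.2 h1); linarith
  have A2 : 0 ≤ 560*(N^5*a^2*(1-a)) := by
    have := mul_nonneg (by positivity : (0:ℝ) ≤ N^5*a^2) (sub_nonneg.2 h1); linarith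
  have A3 := mul_le_mul_of_nonneg_left p2 (show (0:ℝ) ≤ 40*(N^3*a^2) by positivity)
  have A4 := mul_le_mul_of_nonneg_left p3 (show (0:ℝ) ≤ 58*(N^2*a^2) by positivity)
  have A5 := mul_le_mul_of_nonneg_left p4 (show (0:ℝ) ≤ 45*(N*a^2) by positivity)
  have A6 : 0 ≤ 80*(N^4*a^3*(1-a)) := by
    have := mul_nonneg (by positivity : (0:ℝ) ≤ N^4*a^3) (sub_nonneg.2 h1); linarith
  have A7 : (0:ℝ) ≤ 184*N^3*a^5 := by positivity
  have A8 : (0:ℝ) ≤ 30*N^2*a^6 := by positivity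
  have A9 : (0:ℝ) ≤ 15*N*a^7 := by positivity
  have A10 : (0:ℝ) ≤ 17*N^5*a^2 := by positivity
  have A11 : (0:ℝ) ≤ 240*N^4*a^3 := by positivity
  linarith

set_option maxHeartbeats 1600000 in
lemma key_up (N a u : ℝ) (hN : 1 ≤ N) (h0 : 0 ≤ a) (h1 : a ≤ 1)
    (hu : u = a / (2*N + a)) :
    (N + 1/2) * (2*u + 2*u^3/3 + 2*u^5/5 + 2*(u^6/(1-u)))
      ≤ a + a*(1-a)/(4*N) + 1/(16*N) := by
  subst hu
  have h2 : (0:ℝ) < 2*N + a := by linarith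
  have hN0 : (0:ℝ) < N := by linarith
  have h1u : 1 - a/(2*N+a) = (2*N)/(2*N+a) := by field_simp; ring
  rw [h1u, ← sub_nonneg]
  have key : (a + a*(1-a)/(4*N) + 1/(16*N)) - (N + 1/2) * (2*(a/(2*N+a)) + 2*(a/(2*N+a))^3/3
      + 2*(a/(2*N+a))^5/5 + 2*((a/(2*N+a))^6/((2*N)/(2*N+a))))
      = (960*N^6 - 3840*N^6*a + 3840*N^6*a^2 + 2400*N^5*a - 5760*N^5*a^2 + 4480*N^5*a^3
        + 2400*N^4*a^2 - 2560*N^4*a^3 + 640*N^4*a^4 + 1200*N^3*a^3 + 320*N^3*a^4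
        - 1472*N^3*a^5 + 300*N^2*a^4 + 464*N^2*a^5 - 1200*N^2*a^6 + 30*N*a^5 - 120*N*a^6
        - 120*N*a^7) / (480*N^2*(2*N+a)^5) := by
    field_simp
    ring
  rw [key]
  apply div_nonneg _ (by positivity)
  have haN : a ≤ N := h1.trans hN
  have p2 : a^2 ≤ N^2 := by nlinarith
  have p4 : a^4 ≤ N^4 := by nlinarith
  have h1a : (0:ℝ) ≤ 1 - a := by linarith
  have B1 : (0:ℝ) ≤ 960*(N^6*(2*a-1)^2) := by positivity
  have C1 : (0:ℝ) ≤ N^5*a*(14*a-9)^2 :=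
    mul_nonneg (by positivity) (sq_nonneg _)
  have C2 : (0:ℝ) ≤ N^4*a^2*((1-a)*(3-a)) :=
    mul_nonneg (by positivity) (mul_nonneg h1a (by linarith))
  have C3 : (0:ℝ) ≤ N^3*a^3*((1-a)*(1472*a+1152)) :=
    mul_nonneg (by positivity) (mul_nonneg h1a (by linarith))
  have C4 : (0:ℝ) ≤ N^2*a^4*((1-a)*(1200*a+736)) :=
    mul_nonneg (by positivity) (mul_nonneg h1a (by linarith))
  have C5 : (0:ℝ) ≤ N*a^5*((1-a)*(120*a+240)) :=
    mul_nonneg (by positivity) (mul_nonneg h1a (by linarith))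
  have D1 := mul_le_mul_of_nonneg_left p2 (show (0:ℝ) ≤ 436*(N^2*a^2) by positivity)
  have D2 := mul_le_mul_of_nonneg_left p4 (show (0:ℝ) ≤ 210*(N*a) by positivity)
  have E1 : (0:ℝ) ≤ N^5*a := by positivity
  have E2 : (0:ℝ) ≤ N^4*a^2 := by positivity
  have E3 : (0:ℝ) ≤ N^3*a^3 := by positivity
  linarith

theorem log_two_sided_bound (n : ℕ) (hn : 0 < n) (α : ℝ) (hα0 : 0 ≤ α) (hα1 : α ≤ 1) :
    α + α * (1 - α) / (4 * n) ≤ ((n : ℝ) + 1 / 2) * Real.log (((n : ℝ) + α) / n) ∧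
    ((n : ℝ) + 1 / 2) * Real.log (((n : ℝ) + α) / n) ≤
      α + α * (1 - α) / (4 * n) + 1 / (16 * n) := by
  have hN : (1:ℝ) ≤ (n:ℝ) := by exact_mod_cast hn
  have hN0 : (0:ℝ) < (n:ℝ) := by linarith
  set u : ℝ := α / (2*(n:ℝ) + α) with hu
  have h2 : (0:ℝ) < 2*(n:ℝ) + α := by linarith
  have hu0 : 0 ≤ u := div_nonneg hα0 h2.le
  have hu3 : u ≤ 1/3 := by
    rw [hu, div_le_iff₀ h2]; linarith
  have habs : |u| < 1 := by rw [abs_of_nonneg hu0]; linarith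
  have habs' : |(-u)| < 1 := by rwa [abs_neg]
  have h1 := Real.abs_log_sub_add_sum_range_le habs 5
  have h2' := Real.abs_log_sub_add_sum_range_le habs' 5
  simp only [Finset.sum_range_succ, Finset.sum_range_zero, abs_of_nonneg hu0, abs_neg] at h1 h2'
  rw [abs_le] at h1 h2'
  have hlogeq : Real.log (((n:ℝ) + α) / n) = Real.log (1 + u) - Real.log (1 - u) := by
    have hq : ((n:ℝ) + α) / n = (1 + u) / (1 - u) := by
      rw [hu]; field_simp; ring
    rw [hq, Real.log_div (by linarith) (by linarith)]
  rw [hlogeq]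
  have hE : 0 ≤ u^6/(1-u) := div_nonneg (by positivity) (by linarith)
  have push : ∀ i : ℕ, u ^ i = u ^ i := fun _ => rfl
  norm_num at h1 h2'
  constructor
  · have hlow : 2*u + 2*u^3/3 + 2*u^5/5 - 2*(u^6/(1-u)) ≤ Real.log (1+u) - Real.log (1-u) := by
      obtain ⟨a1, a2⟩ := h1
      obtain ⟨b1, b2⟩ := h2'
      linarith
    calc α + α * (1 - α) / (4 * n) ≤ ((n:ℝ) + 1/2) * (2*u + 2*u^3/3 + 2*u^5/5 - 2*(u^6/(1-u))) :=
          key_low (n:ℝ) α u hN hα0 hα1 hu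
      _ ≤ ((n:ℝ) + 1/2) * (Real.log (1+u) - Real.log (1-u)) := by
          apply mul_le_mul_of_nonneg_left hlow (by linarith)
  · have hup : Real.log (1+u) - Real.log (1-u) ≤ 2*u + 2*u^3/3 + 2*u^5/5 + 2*(u^6/(1-u)) := by
      obtain ⟨a1, a2⟩ := h1
      obtain ⟨b1, b2⟩ := h2'
      linarith
    calc ((n:ℝ) + 1/2) * (Real.log (1+u) - Real.log (1-u))
        ≤ ((n:ℝ) + 1/2) * (2*u + 2*u^3/3 + 2*u^5/5 + 2*(u^6/(1-u))) :=
          mul_le_mul_of_nonneg_left hup (by linarith)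
      _ ≤ α + α * (1 - α) / (4 * n) + 1 / (16 * n) := key_up (n:ℝ) α u hN hα0 hα1 hu
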